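/- Let θ, ψ ∈ ℝ^N, u ∈ ℝ^N, f_x, f_y ∈ ℝ^N, and m_1, …, m_N > 0, and let Ω₁ be the 2N×2N block matrix [[−M̂S'U, diag(f_x + C'u)], [M̂C'U, diag(f_y + S'u)]] with M̂ = diag(1/m_i), S' = diag(sin(θ_i + ψ_i)), C' = diag(cos(θ_i + ψ_i)), U = diag(u_i). Then Ω₁ is invertible if and only if for every i = 1, …, N both u_i ≠ 0 and u_i + cos(θ_i + ψ_i)·f_{x,i} + sin(θ_i + ψ_i)·f_{y,i} ≠ 0. -/

import Mathlib

open Matrix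

lemma det_fromBlocks_diagonal {N : ℕ} (a b c d : Fin N → ℝ) :
    (Matrix.fromBlocks (Matrix.diagonal a) (Matrix.diagonal b)
      (Matrix.diagonal c) (Matrix.diagonal d)).det = ∏ i, (a i * d i - b i * c i) := by
  classical
  let e : Fin 2 × Fin N ≃ Fin N ⊕ Fin N :=
    (finTwoEquiv.prodCongr (Equiv.refl (Fin N))).trans (Equiv.boolProdEquivSum (Fin N))
  have key : Matrix.fromBlocks (Matrix.diagonal a) (Matrix.diagonal b)
      (Matrix.diagonal c) (Matrix.diagonal d)
      = (Matrix.blockDiagonal (fun i => !![a i, b i; c i, d i])).submatrix e.symm e.symm := by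
    ext x y
    rcases x with i | i <;> rcases y with j | j <;>
      simp [e, Matrix.blockDiagonal_apply, Matrix.diagonal_apply, finTwoEquiv,
        Equiv.boolProdEquivSum, eq_comm, - Bool.true_eq]
  rw [key, Matrix.det_submatrix_equiv_self, Matrix.det_blockDiagonal]
  congr 1
  ext i
  rw [Matrix.det_fin_two_of]

/-- The observability block `Ω₁` is invertible if and only if, for every link `i`, the
thruster force is non-zero (`uᵢ ≠ 0`) and the net force is non-zero
(`uᵢ + cos (θᵢ + ψᵢ) f_{x,i} + sin (θᵢ + ψᵢ) f_{y,i} ≠ 0`). -/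
theorem Omega1_isUnit_iff (N : ℕ) (θ ψ u fx fy : Fin N → ℝ)
    (m : Fin N → ℝ) (hm : ∀ i, 0 < m i)
    (Mhat S' C' U : Matrix (Fin N) (Fin N) ℝ)
    (hM : Mhat = Matrix.diagonal fun i => (m i)⁻¹)
    (hS : S' = Matrix.diagonal fun i => Real.sin (θ i + ψ i))
    (hC : C' = Matrix.diagonal fun i => Real.cos (θ i + ψ i))
    (hU : U = Matrix.diagonal u)
    (Ω₁ : Matrix (Fin N ⊕ Fin N) (Fin N ⊕ Fin N) ℝ)
    (hΩ : Ω₁ = Matrix.fromBlocks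
      (-(Mhat * S' * U)) (Matrix.diagonal fun i => fx i + Real.cos (θ i + ψ i) * u i)
      (Mhat * C' * U) (Matrix.diagonal fun i => fy i + Real.sin (θ i + ψ i) * u i)) :
    IsUnit Ω₁ ↔ ∀ i, u i ≠ 0 ∧
      u i + Real.cos (θ i + ψ i) * fx i + Real.sin (θ i + ψ i) * fy i ≠ 0 := by
  subst hM hS hC hU
  have hA : -(Matrix.diagonal (fun i => (m i)⁻¹) * Matrix.diagonal (fun i => Real.sin (θ i + ψ i))
      * Matrix.diagonal u) = Matrix.diagonal (fun i => -((m i)⁻¹ * Real.sin (θ i + ψ i) * u i)) := by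
    simp [Matrix.diagonal_mul_diagonal, ← Matrix.diagonal_neg]
  have hC2 : Matrix.diagonal (fun i => (m i)⁻¹) * Matrix.diagonal (fun i => Real.cos (θ i + ψ i))
      * Matrix.diagonal u = Matrix.diagonal (fun i => (m i)⁻¹ * Real.cos (θ i + ψ i) * u i) := by
    simp [Matrix.diagonal_mul_diagonal]
  rw [hA, hC2] at hΩ
  rw [Matrix.isUnit_iff_isUnit_det, hΩ, det_fromBlocks_diagonal, isUnit_iff_ne_zero,
    Finset.prod_ne_zero_iff]
  apply forall_congr'
  intro i
  have hmi : (m i) ≠ 0 := (hm i).ne'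
  constructor
  · intro h
    simp only [Finset.mem_univ, forall_true_left] at h
    set s := Real.sin (θ i + ψ i)
    set c := Real.cos (θ i + ψ i)
    have hsc : s ^ 2 + c ^ 2 = 1 := Real.sin_sq_add_cos_sq _
    have key : -((m i)⁻¹ * s * u i) * (fy i + s * u i) -
        (fx i + c * u i) * ((m i)⁻¹ * c * u i)
        = -((m i)⁻¹ * u i * (u i + c * fx i + s * fy i)) := by
      linear_combination (-(m i)⁻¹ * u i ^ 2) * hsc
    rw [key] at h
    constructor
    · intro hu; apply h; simp [hu]
    · intro hnet; apply h; simp [hnet]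
  · rintro ⟨hu, hnet⟩ _
    set s := Real.sin (θ i + ψ i)
    set c := Real.cos (θ i + ψ i)
    have hsc : s ^ 2 + c ^ 2 = 1 := Real.sin_sq_add_cos_sq _
    have key : -((m i)⁻¹ * s * u i) * (fy i + s * u i) -
        (fx i + c * u i) * ((m i)⁻¹ * c * u i)
        = -((m i)⁻¹ * u i * (u i + c * fx i + s * fy i)) := by
      linear_combination (-(m i)⁻¹ * u i ^ 2) * hsc
    rw [key]
    simp only [neg_ne_zero]
    exact mul_ne_zero (mul_ne_zero (inv_ne_zero hmi) hu) hnet
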